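/- Let $R$ be a Noetherian ring of prime characteristic $p$, $N \subseteq M$ finitely generated $R$-modules, and $S \subseteq R$ a multiplicative system disjoint from $\bigcup_e \mathrm{Ass}\, F^e(M/N)$ (meaning $S$ meets no prime in this union). Then tight closure commutes with localization at $S$ for the pair $N \subseteq M$: $S^{-1}(N^*_M) = (S^{-1}N)^*_{S^{-1}M}$. -/

import Mathlib

open TensorProduct

/-- `R` viewed as an `R`-algebra via the `e`-th iterated Frobenius `r ↦ r^(p^e)`. -/
def FrobAlg (R : Type*) (p e : ℕ) : Type _ := R

instance {R : Type*} [CommRing R] {p e : ℕ} : CommRing (FrobAlg R p e) := ‹CommRing R›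

noncomputable instance {R : Type*} [CommRing R] {p e : ℕ} [ExpChar R p] :
    Algebra R (FrobAlg R p e) :=
  (show R →+* FrobAlg R p e from iterateFrobenius R p e).toAlgebra

/-- The image `N^{[q]}_M` of `F^e(N)` in the Peskine–Szpiro base change
`F^e(M) = S ⊗_R M` (where `S` is `R` viewed via the `e`-th Frobenius):
the `S`-submodule generated by the elements `1 ⊗ n`, `n ∈ N`. -/
noncomputable def FrobPow {R : Type*} [CommRing R] (p e : ℕ) [ExpChar R p]
    {M : Type*} [AddCommGroup M] [Module R M] (N : Submodule R M) :
    Submodule (FrobAlg R p e) (TensorProduct R (FrobAlg R p e) M) :=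
  Submodule.span (FrobAlg R p e)
    ((fun n => (1 : FrobAlg R p e) ⊗ₜ[R] n) '' (N : Set M))

/-- `R⁰`: the elements of `R` lying in no minimal prime. -/
def RZero (R : Type*) [CommRing R] : Set R := { c | ∀ P ∈ minimalPrimes R, c ∉ P }

/-- The tight closure `N^*_M`: all `m ∈ M` such that for some `c ∈ R⁰`,
`c·m^q ∈ N^{[q]}_M` for all `q = p^e ≫ 0`. -/
noncomputable def TightClosure (R : Type*) [CommRing R] (p : ℕ) [ExpChar R p]
    {M : Type*} [AddCommGroup M] [Module R M] (N : Submodule R M) : Set M :=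
  { m | ∃ c ∈ RZero R, ∃ E : ℕ, ∀ e, E ≤ e →
      (show FrobAlg R p e from c) • ((1 : FrobAlg R p e) ⊗ₜ[R] m) ∈ FrobPow p e N }


namespace Stmt15

variable {R : Type*} [CommRing R] {p : ℕ} (e : ℕ) (S : Submonoid R)
variable {M : Type*} [AddCommGroup M] [Module R M]
variable [ExpChar R p] [ExpChar (Localization S) p]

noncomputable instance instACGFrobLoc :
    AddCommGroup (FrobAlg (Localization S) p e ⊗[Localization S] LocalizedModule S M) :=
  Module.addCommMonoidToAddCommGroup (Localization S)

noncomputable instance instSGAFrobLoc :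
    SemigroupAction (FrobAlg (Localization S) p e)
      (FrobAlg (Localization S) p e ⊗[Localization S] LocalizedModule S M) :=
  MulAction.toSemigroupAction

variable (R p) in
def sA : Submonoid (FrobAlg R p e) := S

variable (R p) in
/-- identity cast `R →+* FrobAlg R p e`. -/
def cA : R →+* FrobAlg R p e := RingHom.id R

variable (R p) in
noncomputable def toA' : R →+* FrobAlg (Localization S) p e :=
  (cA (Localization S) p e).comp (algebraMap R (Localization S))

section smullemmas

variable {e S}

lemma frob_smul (a b : FrobAlg R p e) : a • b = a * b := rfl

lemma rsmul_frobAlg (r : R) (a : FrobAlg R p e) :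
    r • a = cA R p e (r ^ p ^ e) • a := by
  show Mul.mul (iterateFrobenius R p e r) a = _
  rw [iterateFrobenius_def]; rfl

lemma rsmul_frobAlg' (r : Localization S) (a : FrobAlg (Localization S) p e) :
    r • a = cA (Localization S) p e (r ^ p ^ e) • a := by
  show Mul.mul (iterateFrobenius (Localization S) p e r) a = _
  rw [iterateFrobenius_def]; rfl

/-- key twisted-balance identity in `F^e(M)`. -/
lemma frob_tmul (r : R) (m : M) :
    (1 : FrobAlg R p e) ⊗ₜ[R] (r • m)
      = cA R p e (r ^ p ^ e) • ((1 : FrobAlg R p e) ⊗ₜ[R] m) := by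
  rw [← TensorProduct.smul_tmul, rsmul_frobAlg, ← TensorProduct.smul_tmul']

lemma frob_tmul' (r : Localization S) (z : LocalizedModule S M) :
    (1 : FrobAlg (Localization S) p e) ⊗ₜ[Localization S] (r • z)
      = cA (Localization S) p e (r ^ p ^ e)
          • ((1 : FrobAlg (Localization S) p e) ⊗ₜ[Localization S] z) := by
  rw [← TensorProduct.smul_tmul, rsmul_frobAlg', ← TensorProduct.smul_tmul']

lemma Asmul_tmul {W : Type*} [AddCommGroup W] [Module R W] (a b : FrobAlg R p e) (m : W) :
    a • (b ⊗ₜ[R] m) = (a * b) ⊗ₜ[R] m := by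
  rw [TensorProduct.smul_tmul', frob_smul]

lemma Asmul_tmul' (a b : FrobAlg (Localization S) p e) (z : LocalizedModule S M) :
    a • (b ⊗ₜ[Localization S] z) = (a * b) ⊗ₜ[Localization S] z := by
  rw [TensorProduct.smul_tmul', frob_smul]

end smullemmas

/-- The comparison map `F^e(M) → F^e(S⁻¹M)`. -/
noncomputable def Fmap :
    TensorProduct R (FrobAlg R p e) M →+
      TensorProduct (Localization S) (FrobAlg (Localization S) p e) (LocalizedModule S M) :=
  TensorProduct.liftAddHom
    (AddMonoidHom.mk' (fun (a : FrobAlg R p e) =>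
      AddMonoidHom.mk' (fun (m : M) =>
        (toA' R p e S a) ⊗ₜ[Localization S] LocalizedModule.mk m (1 : S))
        (fun m m' => by
          show toA' R p e S a ⊗ₜ[Localization S] (LocalizedModule.mk (m + m') 1) = _
          have : LocalizedModule.mk (m + m') (1:S)
              = LocalizedModule.mk m 1 + LocalizedModule.mk m' 1 := by
            rw [← LocalizedModule.mkLinearMap_apply, ← LocalizedModule.mkLinearMap_apply,
              ← LocalizedModule.mkLinearMap_apply, map_add]
          rw [this, TensorProduct.tmul_add]))
      (fun a b => by
        ext m
        simp only [AddMonoidHom.mk'_apply, AddMonoidHom.add_apply]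
        erw [map_add]; rw [TensorProduct.add_tmul]))
    (by
      intro r a m
      simp only [AddMonoidHom.mk'_apply]
      have h1 : LocalizedModule.mk (r • m) (1 : S) =
          (algebraMap R (Localization S) r) • LocalizedModule.mk m (1 : S) := by
        rw [← Localization.mk_one_eq_algebraMap, LocalizedModule.mk_smul_mk, one_mul]
      rw [rsmul_frobAlg, h1, TensorProduct.tmul_smul, TensorProduct.smul_tmul',
        rsmul_frobAlg']
      rw [frob_smul, frob_smul]
      congr 1
      show (algebraMap R (Localization S)) (Mul.mul (cA R p e (r ^ p ^ e)) a)
          = Mul.mul ((algebraMap R (Localization S)) r ^ p ^ e) ((algebraMap R (Localization S)) a)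
      exact (map_mul (algebraMap R (Localization S)) (r ^ p ^ e) a).trans
        (by rw [map_pow]; rfl))

lemma Fmap_tmul (a : FrobAlg R p e) (m : M) :
    Fmap e S (a ⊗ₜ[R] m) = (toA' R p e S a) ⊗ₜ[Localization S] LocalizedModule.mk m 1 := rfl

lemma Fmap_smul (a : FrobAlg R p e) (x : TensorProduct R (FrobAlg R p e) M) :
    Fmap e S (a • x) = (toA' R p e S a) • Fmap e S x := by
  induction x with
  | zero => rw [smul_zero, map_zero, smul_zero]
  | tmul b m => rw [Asmul_tmul, Fmap_tmul, Fmap_tmul, Asmul_tmul']; erw [map_mul]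
  | add x y hx hy => rw [smul_add, map_add, map_add, hx, hy, smul_add]

/-! ### Part 2 : the backward map -/

variable (R p) in
def cY : FrobAlg (Localization S) p e →+* Localization (sA R p e S) :=
  RingHom.id _

variable (R p) in
def cL : Localization S →+* Localization (sA R p e S) :=
  RingHom.id _

variable (R p) in
def sPow (s : S) : sA R p e S :=
  ⟨cA R p e ((s : R) ^ p ^ e), pow_mem s.2 _⟩

lemma sPow_one : sPow R p e S 1 = 1 := Subtype.ext (one_pow _)

lemma sPow_mul (s t : S) :
    sPow R p e S (s * t) = sPow R p e S s * sPow R p e S t :=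
  Subtype.ext (mul_pow _ _ _)

lemma sPow_smul_tmul (t : S) (m : M) :
    (sPow R p e S t) • ((1 : FrobAlg R p e) ⊗ₜ[R] m)
      = (1 : FrobAlg R p e) ⊗ₜ[R] ((t : R) • m) := by
  rw [Submonoid.smul_def]
  show (cA R p e ((t : R) ^ p ^ e)) • ((1 : FrobAlg R p e) ⊗ₜ[R] m) = _
  rw [← frob_tmul]

variable (R p) in
/-- The Frobenius comparison map on localized modules,
`mk m s ↦ mk (1 ⊗ m) (s^(p^e))`. -/
noncomputable def Dfun (x : LocalizedModule S M) :
    LocalizedModule (sA R p e S) (TensorProduct R (FrobAlg R p e) M) :=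
  x.liftOn
    (fun ms => LocalizedModule.mk ((1 : FrobAlg R p e) ⊗ₜ[R] ms.1) (sPow R p e S ms.2))
    (by
      rintro ⟨m, s⟩ ⟨m', s'⟩ ⟨u, hu⟩
      dsimp only
      rw [LocalizedModule.mk_eq]
      refine ⟨sPow R p e S u, ?_⟩
      rw [Submonoid.smul_def, Submonoid.smul_def, sPow_smul_tmul, sPow_smul_tmul,
        ← Submonoid.smul_def (S := sA R p e S),
        ← Submonoid.smul_def (S := sA R p e S),
        sPow_smul_tmul, sPow_smul_tmul]
      exact congrArg (fun w => (1 : FrobAlg R p e) ⊗ₜ[R] w) hu)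

lemma Dfun_mk (m : M) (s : S) :
    Dfun R p e S (LocalizedModule.mk m s)
      = LocalizedModule.mk ((1 : FrobAlg R p e) ⊗ₜ[R] m) (sPow R p e S s) := rfl

lemma Dfun_add (x y : LocalizedModule S M) :
    Dfun R p e S (x + y) = Dfun R p e S x + Dfun R p e S y := by
  induction x, y using LocalizedModule.induction_on₂ with
  | _ m m' s s' =>
    rw [LocalizedModule.mk_add_mk, Dfun_mk, Dfun_mk, Dfun_mk, LocalizedModule.mk_add_mk,
      ← sPow_mul]
    congr 1
    rw [Submonoid.smul_def, Submonoid.smul_def, sPow_smul_tmul, sPow_smul_tmul,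
      TensorProduct.tmul_add, ← Submonoid.smul_def, ← Submonoid.smul_def]

variable (R p) in
noncomputable def Dmap :
    LocalizedModule S M →+
      LocalizedModule (sA R p e S) (TensorProduct R (FrobAlg R p e) M) :=
  AddMonoidHom.mk' (Dfun R p e S) (Dfun_add e S)

lemma Dmap_locmk_smul (b : R) (t : S) (z : LocalizedModule S M) :
    Dmap R p e S ((Localization.mk b t) • z)
      = (Localization.mk (cA R p e (b ^ p ^ e)) (sPow R p e S t)) • Dmap R p e S z := by
  induction z with
  | _ m s =>
    show Dfun R p e S (Localization.mk b t • LocalizedModule.mk m s)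
        = Localization.mk (cA R p e (b ^ p ^ e)) (sPow R p e S t)
            • Dfun R p e S (LocalizedModule.mk m s)
    rw [LocalizedModule.mk_smul_mk, Dfun_mk, Dfun_mk, LocalizedModule.mk_smul_mk,
      ← sPow_mul]
    congr 1
    rw [← frob_tmul]

lemma Dmap_smul (r' : Localization S) (z : LocalizedModule S M) :
    Dmap R p e S (r' • z) = (cL R p e S (r' ^ p ^ e)) • Dmap R p e S z := by
  induction r' using Localization.induction_on with
  | H bt =>
    rw [Dmap_locmk_smul]
    congr 1
    show Localization.mk (cA R p e (bt.1 ^ p ^ e)) (sPow R p e S bt.2)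
        = cL R p e S (Localization.mk bt.1 bt.2 ^ p ^ e)
    rw [Localization.mk_pow]
    rfl

variable (R p) in
/-- The backward comparison map `F^e(S⁻¹M) → S⁻¹(F^e M)`. -/
noncomputable def Hmap :
    TensorProduct (Localization S) (FrobAlg (Localization S) p e) (LocalizedModule S M) →+
      LocalizedModule (sA R p e S) (TensorProduct R (FrobAlg R p e) M) :=
  TensorProduct.liftAddHom
    (AddMonoidHom.mk' (fun a' =>
      AddMonoidHom.mk' (fun z => (cY R p e S a') • Dmap R p e S z)
        (fun z z' => by beta_reduce; rw [map_add, smul_add]))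
      (fun a' b' => by
        ext z
        simp only [AddMonoidHom.mk'_apply, AddMonoidHom.add_apply]
        rw [map_add, add_smul]))
    (by
      intro r' a' z
      simp only [AddMonoidHom.mk'_apply]
      rw [Dmap_smul, rsmul_frobAlg', frob_smul, map_mul, mul_smul]
      rw [smul_comm]
      rfl)

lemma Hmap_tmul (a' : FrobAlg (Localization S) p e) (z : LocalizedModule S M) :
    Hmap R p e S (a' ⊗ₜ[Localization S] z)
      = (cY R p e S a') • Dmap R p e S z := rfl

lemma Hmap_Fmap (x : TensorProduct R (FrobAlg R p e) M) :
    Hmap R p e S (Fmap e S x) = LocalizedModule.mk x 1 := by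
  induction x with
  | zero => rw [map_zero, map_zero]; exact (LocalizedModule.zero_mk 1).symm
  | tmul a m =>
    rw [Fmap_tmul, Hmap_tmul]
    show (cY R p e S (toA' R p e S a)) • Dfun R p e S (LocalizedModule.mk m 1) = _
    rw [Dfun_mk, sPow_one]
    have h1 : cY R p e S (toA' R p e S a)
        = Localization.mk (cA R p e a) (1 : sA R p e S) :=
      (Localization.mk_one_eq_algebraMap (a : R)).symm
    rw [h1, LocalizedModule.mk_smul_mk, one_mul]
    congr 1
    rw [Asmul_tmul, mul_one]
    rfl
  | add x y hx hy =>
    rw [map_add, map_add, hx, hy, LocalizedModule.mk_add_mk, one_smul, one_smul, one_mul]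


/-! ### Part 3 : transfer of `FrobPow` membership, and nonzerodivisors -/

variable (R p) in
lemma A'_surj (a' : FrobAlg (Localization S) p e) :
    ∃ (b : R) (t : S), a' = cA (Localization S) p e (Localization.mk b t) := by
  obtain ⟨b, t, h⟩ : ∃ (b : R) (t : S),
      (show Localization S from a') = Localization.mk b t :=
    Localization.induction_on (show Localization S from a') (fun y => ⟨y.1, y.2, rfl⟩)
  exact ⟨b, t, h⟩

lemma loc_shift (n : M) (s : S) :
    (toA' R p e S ((s : R) ^ p ^ e))
        • ((1 : FrobAlg (Localization S) p e) ⊗ₜ[Localization S] LocalizedModule.mk n s)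
      = (1 : FrobAlg (Localization S) p e) ⊗ₜ[Localization S] LocalizedModule.mk n 1 := by
  have h1 : (LocalizedModule.mk n 1 : LocalizedModule S M)
      = (algebraMap R (Localization S) (s : R)) • LocalizedModule.mk n s := by
    rw [← Localization.mk_one_eq_algebraMap, LocalizedModule.mk_smul_mk, one_mul]
    rw [LocalizedModule.mk_eq]
    exact ⟨1, by simp [Submonoid.smul_def]⟩
  rw [h1, frob_tmul']
  congr 1
  show toA' R p e S ((s : R) ^ p ^ e) = cA (Localization S) p e
    ((algebraMap R (Localization S) (s : R)) ^ p ^ e)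
  rw [map_pow]
  rfl

lemma mk_cancel_mul (b : R) (t : S) :
    (Localization.mk (t : R) (1 : S)) * Localization.mk b t = Localization.mk b 1 := by
  rw [Localization.mk_mul]
  rw [Localization.mk_eq_mk_iff]
  exact Localization.r_iff_exists.mpr ⟨1, by push_cast; ring⟩

lemma Fmap_mem (N : Submodule R M) {x : TensorProduct R (FrobAlg R p e) M}
    (hx : x ∈ FrobPow p e N) :
    Fmap e S x ∈ FrobPow p e (N.localized S) := by
  induction hx using Submodule.span_induction with
  | mem y hy =>
    obtain ⟨n, hn, rfl⟩ := hy
    rw [Fmap_tmul]; erw [map_one]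
    refine Submodule.subset_span ⟨LocalizedModule.mk n 1, ?_, rfl⟩
    exact ⟨n, hn, 1, (IsLocalizedModule.mk_eq_mk' _ _).symm⟩
  | zero => rw [map_zero]; exact zero_mem _
  | add y z _ _ hy hz => rw [map_add]; exact add_mem hy hz
  | smul a y _ hy => rw [Fmap_smul]; exact Submodule.smul_mem _ _ hy

lemma locFrobPow_decomp (N : Submodule R M)
    {y : TensorProduct (Localization S) (FrobAlg (Localization S) p e) (LocalizedModule S M)}
    (hy : y ∈ FrobPow p e (N.localized S)) :
    ∃ T : S, ∃ w ∈ FrobPow p e N, (toA' R p e S (T : R)) • y = Fmap e S w := by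
  induction hy using Submodule.span_induction with
  | mem y hy =>
    obtain ⟨z, hz, rfl⟩ := hy
    obtain ⟨n, hn, s, rfl⟩ := hz
    refine ⟨s ^ (p ^ e), (1 : FrobAlg R p e) ⊗ₜ[R] n,
      Submodule.subset_span ⟨n, hn, rfl⟩, ?_⟩
    rw [Fmap_tmul]; erw [map_one]; rw [← IsLocalizedModule.mk_eq_mk']
    have hc : ((s ^ (p ^ e) : S) : R) = (s : R) ^ p ^ e := rfl
    rw [hc, loc_shift]
  | zero => exact ⟨1, 0, zero_mem _, by rw [map_zero, smul_zero]⟩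
  | add y z _ _ hy hz =>
    obtain ⟨T1, w1, hw1, e1⟩ := hy
    obtain ⟨T2, w2, hw2, e2⟩ := hz
    refine ⟨T1 * T2, (cA R p e ((T2 : R))) • w1 + (cA R p e ((T1 : R))) • w2,
      add_mem (Submodule.smul_mem _ _ hw1) (Submodule.smul_mem _ _ hw2), ?_⟩
    have hc1 : toA' R p e S (cA R p e (T1 : R)) = toA' R p e S (T1 : R) := rfl
    have hc2 : toA' R p e S (cA R p e (T2 : R)) = toA' R p e S (T2 : R) := rfl
    rw [map_add, Fmap_smul, Fmap_smul, hc1, hc2, ← e1, ← e2, Submonoid.coe_mul, map_mul,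
      smul_add, mul_smul, mul_smul]
    congr 1
    exact smul_comm _ _ _
  | smul a' y _ hy =>
    obtain ⟨T, w, hw, hT⟩ := hy
    obtain ⟨b, t, rfl⟩ := A'_surj R p e S a'
    refine ⟨t * T, (cA R p e b) • w, Submodule.smul_mem _ _ hw, ?_⟩
    rw [Fmap_smul, Submonoid.coe_mul, map_mul]
    have h1 : toA' R p e S (t : R) * cA (Localization S) p e (Localization.mk b t)
        = toA' R p e S b := by
      show (Localization.mk (t : R) (1 : S)) * Localization.mk b t
          = algebraMap R (Localization S) b
      rw [mk_cancel_mul, Localization.mk_one_eq_algebraMap]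
    calc (toA' R p e S (t : R) * toA' R p e S (T : R))
          • (cA (Localization S) p e (Localization.mk b t) • y)
        = (toA' R p e S (t : R) * cA (Localization S) p e (Localization.mk b t))
            • (toA' R p e S (T : R) • y) := by
          rw [mul_smul, mul_smul, smul_comm (toA' R p e S (T : R))]
      _ = toA' R p e S b • Fmap e S w := by rw [h1, hT]
      _ = toA' R p e S (cA R p e b) • Fmap e S w := rfl

variable (R p) in
lemma lTensor_Asmul {W W' : Type*} [AddCommGroup W] [Module R W]
    [AddCommGroup W'] [Module R W'] (f : W →ₗ[R] W') (a : FrobAlg R p e)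
    (x : TensorProduct R (FrobAlg R p e) W) :
    LinearMap.lTensor (FrobAlg R p e) f (a • x)
      = a • LinearMap.lTensor (FrobAlg R p e) f x := by
  induction x with
  | zero => rw [smul_zero, map_zero, smul_zero]
  | tmul b m =>
    rw [Asmul_tmul, LinearMap.lTensor_tmul, LinearMap.lTensor_tmul, Asmul_tmul]
  | add x y hx hy => rw [smul_add, map_add, map_add, hx, hy, smul_add]

lemma mem_frobPow_iff (N : Submodule R M) (x : TensorProduct R (FrobAlg R p e) M) :
    x ∈ FrobPow p e N ↔ LinearMap.lTensor (FrobAlg R p e) N.mkQ x = 0 := by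
  constructor
  · intro hx
    induction hx using Submodule.span_induction with
    | mem y hy =>
      obtain ⟨n, hn, rfl⟩ := hy
      rw [LinearMap.lTensor_tmul]
      have : N.mkQ n = 0 := (Submodule.Quotient.mk_eq_zero N).mpr hn
      rw [this, TensorProduct.tmul_zero]
    | zero => rw [map_zero]
    | add y z _ _ hy hz => rw [map_add, hy, hz, add_zero]
    | smul a y _ hy => rw [lTensor_Asmul, hy, smul_zero]
  · intro hx
    have hker := lTensor_mkQ (FrobAlg R p e) N
    have hx2 : x ∈ LinearMap.range (LinearMap.lTensor (FrobAlg R p e) N.subtype) := by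
      rw [← hker]; exact hx
    obtain ⟨z, rfl⟩ := hx2
    clear hx
    induction z with
    | zero => rw [map_zero]; exact zero_mem _
    | tmul a n =>
      rw [LinearMap.lTensor_tmul]
      have : (a ⊗ₜ[R] (N.subtype n) : TensorProduct R (FrobAlg R p e) M)
          = a • ((1 : FrobAlg R p e) ⊗ₜ[R] (n : M)) := by
        rw [Asmul_tmul, mul_one]; rfl
      rw [this]
      exact Submodule.smul_mem _ _ (Submodule.subset_span ⟨(n : M), n.2, rfl⟩)
    | add x y hx hy => rw [map_add]; exact add_mem hx hy

lemma nzd [IsNoetherianRing R] (N : Submodule R M)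
    (hd : ∀ P ∈ associatedPrimes (FrobAlg R p e)
        (TensorProduct R (FrobAlg R p e) (M ⧸ N)),
      Disjoint (S : Set R) (show Set R from (P : Set (FrobAlg R p e))))
    (s : R) (hs : s ∈ S) (x : TensorProduct R (FrobAlg R p e) M)
    (hx : (cA R p e s) • x ∈ FrobPow p e N) : x ∈ FrobPow p e N := by
  haveI : IsNoetherianRing (FrobAlg R p e) := ‹IsNoetherianRing R›
  rw [mem_frobPow_iff] at hx ⊢
  rw [lTensor_Asmul] at hx
  by_contra h
  have hzd : (cA R p e s) ∈
      ⋃ P ∈ associatedPrimes (FrobAlg R p e) (TensorProduct R (FrobAlg R p e) (M ⧸ N)),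
        (P : Set (FrobAlg R p e)) := by
    rw [biUnion_associatedPrimes_eq_zero_divisors]
    exact ⟨_, h, hx⟩
  obtain ⟨P, hP, hsP⟩ := Set.mem_iUnion₂.mp hzd
  exact Set.disjoint_left.mp (hd P hP) hs hsP

/-! ### Part 4 : minimal primes and localization -/

lemma disjoint_of_comap_mem_min {P : Ideal (Localization S)} (hP : P.IsPrime) :
    Disjoint (S : Set R) (P.comap (algebraMap R (Localization S)) : Set R) := by
  rw [Set.disjoint_left]
  intro t htS htP
  have : algebraMap R (Localization S) t ∈ P := htP
  have hunit : IsUnit (algebraMap R (Localization S) t) :=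
    IsLocalization.map_units (Localization S) ⟨t, htS⟩
  exact hP.ne_top (P.eq_top_of_isUnit_mem this hunit)

/-- The comap of a minimal prime of `S⁻¹R` is a minimal prime of `R` (disjoint from `S`). -/
lemma comap_min_of_min {P : Ideal (Localization S)}
    (hP : P ∈ minimalPrimes (Localization S)) :
    P.comap (algebraMap R (Localization S)) ∈ minimalPrimes R := by
  obtain ⟨⟨hprime, -⟩, hmin⟩ := hP
  haveI := hprime
  haveI hc : (P.comap (algebraMap R (Localization S))).IsPrime := Ideal.comap_isPrime _ _
  obtain ⟨Q, hQ, hQle⟩ := Ideal.exists_minimalPrimes_le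
    (bot_le : (⊥ : Ideal R) ≤ P.comap (algebraMap R (Localization S)))
  have hQp : Q.IsPrime := hQ.1.1
  have hQdisj : Disjoint (S : Set R) (Q : Set R) :=
    Set.disjoint_of_subset_right hQle (disjoint_of_comap_mem_min S hprime)
  have hmap : (Q.map (algebraMap R (Localization S))).IsPrime :=
    IsLocalization.isPrime_of_isPrime_disjoint S (Localization S) Q hQp hQdisj
  have hle : Q.map (algebraMap R (Localization S)) ≤ P := by
    calc Q.map (algebraMap R (Localization S))
        ≤ (P.comap (algebraMap R (Localization S))).map (algebraMap R (Localization S)) :=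
          Ideal.map_mono hQle
      _ ≤ P := Ideal.map_comap_le
  have hPle : P ≤ Q.map (algebraMap R (Localization S)) := hmin ⟨hmap, bot_le⟩ hle
  have hcomap : P.comap (algebraMap R (Localization S)) ≤ Q := by
    calc P.comap (algebraMap R (Localization S))
        ≤ (Q.map (algebraMap R (Localization S))).comap (algebraMap R (Localization S)) :=
          Ideal.comap_mono hPle
      _ = Q := IsLocalization.under_map_of_isPrime_disjoint S (Localization S) hQp hQdisj
  have : P.comap (algebraMap R (Localization S)) = Q := le_antisymm hcomap hQle
  rw [this]; exact hQ

/-- The map of a minimal prime of `R` disjoint from `S` is a minimal prime of `S⁻¹R`. -/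
lemma map_min_of_min {P : Ideal R} (hP : P ∈ minimalPrimes R)
    (hd : Disjoint (S : Set R) (P : Set R)) :
    P.map (algebraMap R (Localization S)) ∈ minimalPrimes (Localization S) := by
  have hPp : P.IsPrime := hP.1.1
  have hmap : (P.map (algebraMap R (Localization S))).IsPrime :=
    IsLocalization.isPrime_of_isPrime_disjoint S (Localization S) P hPp hd
  refine ⟨⟨hmap, bot_le⟩, ?_⟩
  rintro Q ⟨hQp, -⟩ hQle
  haveI := hQp
  have hcQ : (Q.comap (algebraMap R (Localization S))).IsPrime := Ideal.comap_isPrime _ _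
  obtain ⟨Q', hQ', hQ'le⟩ := Ideal.exists_minimalPrimes_le
    (bot_le : (⊥ : Ideal R) ≤ Q.comap (algebraMap R (Localization S)))
  have hQ'leP : Q' ≤ P := by
    calc Q' ≤ Q.comap (algebraMap R (Localization S)) := hQ'le
      _ ≤ (P.map (algebraMap R (Localization S))).comap (algebraMap R (Localization S)) :=
          Ideal.comap_mono hQle
      _ = P := IsLocalization.under_map_of_isPrime_disjoint S (Localization S) hPp hd
  have hPQ' : P ≤ Q' := hP.2 ⟨hQ'.1.1, bot_le⟩ hQ'leP
  have hPQ : P ≤ Q.comap (algebraMap R (Localization S)) := le_trans hPQ' hQ'le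
  calc P.map (algebraMap R (Localization S))
      ≤ (Q.comap (algebraMap R (Localization S))).map (algebraMap R (Localization S)) :=
        Ideal.map_mono hPQ
    _ ≤ Q := Ideal.map_comap_le

/-! ### Part 5 : `RZero` under localization -/

def RZero' (R : Type*) [CommRing R] : Set R := { c | ∀ P ∈ minimalPrimes R, c ∉ P }

lemma rzero_map {c : R} (hc : ∀ P ∈ minimalPrimes R, c ∉ P) :
    ∀ P ∈ minimalPrimes (Localization S), algebraMap R (Localization S) c ∉ P := by
  intro P hP hmem
  exact hc _ (comap_min_of_min S hP) hmem

lemma rzero_of_loc (c : R) (t : S)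
    (hc : ∀ P ∈ minimalPrimes (Localization S), Localization.mk c t ∉ P) :
    ∀ P ∈ minimalPrimes R, Disjoint (S : Set R) (P : Set R) → c ∉ P := by
  intro P hP hd hcP
  have hPp : P.IsPrime := hP.1.1
  have hmap := map_min_of_min S hP hd
  haveI hprime : (P.map (algebraMap R (Localization S))).IsPrime :=
    IsLocalization.isPrime_of_isPrime_disjoint S (Localization S) P hPp hd
  have h1 : algebraMap R (Localization S) c ∈ P.map (algebraMap R (Localization S)) :=
    Ideal.mem_map_of_mem _ hcP
  have h2 : Localization.mk (t : R) 1 * Localization.mk c t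
      ∈ P.map (algebraMap R (Localization S)) := by
    rw [mk_cancel_mul, Localization.mk_one_eq_algebraMap]; exact h1
  rcases hprime.mem_or_mem h2 with h3 | h3
  · have ht : (t : R) ∈ P := by
      have : algebraMap R (Localization S) (t : R)
          ∈ P.map (algebraMap R (Localization S)) := by
        rw [← Localization.mk_one_eq_algebraMap]; exact h3
      have hcomap : (t : R) ∈ (P.map (algebraMap R (Localization S))).comap
          (algebraMap R (Localization S)) := this
      rwa [← Ideal.under_def, IsLocalization.under_map_of_isPrime_disjoint S (Localization S) hPp hd] at hcomap
    exact Set.disjoint_left.mp hd t.2 ht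
  · exact hc _ hmap h3

lemma smul_mem_of_unit_smul_mem {A₀ : Type*} [CommRing A₀] {M₀ : Type*} [AddCommGroup M₀]
    [Module A₀ M₀] (Sub : Submodule A₀ M₀) {u : A₀} (hu : IsUnit u) {x : M₀}
    (h : u • x ∈ Sub) : x ∈ Sub := by
  obtain ⟨v, rfl⟩ := hu
  have h2 := Sub.smul_mem ((v⁻¹ : A₀ˣ) : A₀) h
  rwa [smul_smul, Units.inv_mul, one_smul] at h2

end Stmt15

open Stmt15 in
/-- If the multiplicative system `S` is disjoint from `⋃ₑ Ass Fᵉ(M/N)`, then tight closure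
commutes with localization at `S` for the pair `N ⊆ M`:
`S⁻¹(N^*_M) = (S⁻¹N)^*_{S⁻¹M}`. -/
theorem stmt_15 (R : Type*) [CommRing R] [IsNoetherianRing R] (p : ℕ) [Fact p.Prime]
    [CharP R p]
    (M : Type*) [AddCommGroup M] [Module R M] [Module.Finite R M]
    (N : Submodule R M) (S : Submonoid R) [CharP (Localization S) p]
    (hdisj : ∀ e : ℕ, ∀ P ∈ associatedPrimes (FrobAlg R p e)
        (TensorProduct R (FrobAlg R p e) (M ⧸ N)),
      Disjoint (S : Set R) (show Set R from (P : Set (FrobAlg R p e)))) :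
    { x : LocalizedModule S M |
        ∃ m ∈ TightClosure R p N, ∃ s : S, x = LocalizedModule.mk m s } =
      TightClosure (Localization S) p (N.localized S) := by
  apply Set.eq_of_subset_of_subset
  · rintro x ⟨m, hm, s, rfl⟩
    obtain ⟨c, hc, E, hE⟩ := hm
    refine ⟨algebraMap R (Localization S) c, rzero_map S hc, E, fun e he => ?_⟩
    have h1 := Fmap_mem e S N (hE e he)
    rw [Fmap_smul, Fmap_tmul] at h1; erw [map_one] at h1
    have hu : IsUnit (toA' R p e S ((s : R) ^ p ^ e)) :=
      IsLocalization.map_units (Localization S) (s ^ (p ^ e))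
    refine smul_mem_of_unit_smul_mem _ hu ?_
    rw [smul_comm, loc_shift]
    exact h1
  · intro x hx
    revert hx
    induction x using LocalizedModule.induction_on with
    | _ m s =>
      intro hx
      obtain ⟨c', hc', E, hE⟩ := hx
      obtain ⟨c, t, hct⟩ : ∃ (c : R) (t : S), c' = Localization.mk c t :=
        Localization.induction_on c' (fun y => ⟨y.1, y.2, rfl⟩)
      classical
      refine ⟨m, ?_, s, rfl⟩
      -- the ideal of multipliers
      let D : Ideal R :=
        { carrier := {d | ∀ e, E ≤ e →
            (cA R p e d) • ((1 : FrobAlg R p e) ⊗ₜ[R] m) ∈ FrobPow p e N}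
          zero_mem' := fun e he => by rw [map_zero, zero_smul]; exact zero_mem _
          add_mem' := fun {a b} ha hb e he => by
            rw [map_add, add_smul]; exact add_mem (ha e he) (hb e he)
          smul_mem' := fun r d hd e he => by
            rw [smul_eq_mul, map_mul, mul_smul]
            exact Submodule.smul_mem _ _ (hd e he) }
      have hcD : c ∈ D := by
        intro e he
        have h0 := hE e he
        have hcc : toA' R p e S (t : R) * (show FrobAlg (Localization S) p e from c')
            = toA' R p e S c := by
          rw [hct]
          show algebraMap R (Localization S) (t : R) * Localization.mk c t
              = algebraMap R (Localization S) c
          rw [← Localization.mk_one_eq_algebraMap, mk_cancel_mul,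
            Localization.mk_one_eq_algebraMap]
        have h1 : (toA' R p e S (t : R) * (show FrobAlg (Localization S) p e from c'))
            • ((1 : FrobAlg (Localization S) p e)
                ⊗ₜ[Localization S] LocalizedModule.mk m s)
            ∈ FrobPow p e (N.localized S) := by
          rw [mul_smul]; exact Submodule.smul_mem _ _ h0
        rw [hcc] at h1
        have h2 : toA' R p e S c
            • ((1 : FrobAlg (Localization S) p e)
                ⊗ₜ[Localization S] LocalizedModule.mk m 1)
            ∈ FrobPow p e (N.localized S) := by
          rw [← loc_shift e S m s, smul_comm]
          exact Submodule.smul_mem _ _ h1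
        have hFP : Fmap e S ((cA R p e c) • ((1 : FrobAlg R p e) ⊗ₜ[R] m))
            ∈ FrobPow p e (N.localized S) := by
          rw [Fmap_smul, Fmap_tmul]; erw [map_one]; exact h2
        obtain ⟨T, w, hw, hTw⟩ := locFrobPow_decomp e S N hFP
        have h4 : Fmap e S ((cA R p e (T : R)) • ((cA R p e c)
            • ((1 : FrobAlg R p e) ⊗ₜ[R] m))) = Fmap e S w := by
          rw [Fmap_smul]; exact hTw
        have h5 := congrArg (Hmap R p e S) h4
        rw [Hmap_Fmap, Hmap_Fmap, LocalizedModule.mk_eq] at h5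
        obtain ⟨u, hu⟩ := h5
        rw [one_smul, one_smul] at hu
        refine nzd e S N (hdisj e) ((show R from u.1) * (T : R)) (mul_mem u.2 T.2) _ ?_
        have h6 : (cA R p e ((show R from u.1) * (T : R)))
            • ((cA R p e c) • ((1 : FrobAlg R p e) ⊗ₜ[R] m))
            = (u : FrobAlg R p e) • w := by
          rw [map_mul, mul_smul]
          exact hu
        rw [h6]
        exact Submodule.smul_mem _ _ hw
      -- prime avoidance set-up
      have hfin : (minimalPrimes R).Finite := minimalPrimes.finite_of_isNoetherianRing R
      set Pfin : Finset (Ideal R) := hfin.toFinset with hPfindef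
      have hPfin : ∀ P : Ideal R, P ∈ Pfin ↔ P ∈ minimalPrimes R :=
        fun P => hfin.mem_toFinset
      set B : Finset (Ideal R) :=
        Pfin.filter (fun P => ¬ Disjoint (S : Set R) (P : Set R)) with hBdef
      have hBex : ∀ P ∈ B, ∃ t0, t0 ∈ S ∧ t0 ∈ P := fun P hP =>
        Set.not_disjoint_iff.mp (Finset.mem_filter.mp hP).2
      choose f hfS hfP using hBex
      let u₀ : R := ∏ P ∈ B.attach, f P.1 P.2
      have hu₀S : u₀ ∈ S := prod_mem (fun P _ => hfS P.1 P.2)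
      have hu₀mem : ∀ P ∈ B, u₀ ∈ P := by
        intro P hP
        have : u₀ = f P hP * ∏ Q ∈ B.attach.erase ⟨P, hP⟩, f Q.1 Q.2 :=
          (Finset.mul_prod_erase B.attach _ (Finset.mem_attach B ⟨P, hP⟩)).symm
        rw [this]
        exact Ideal.mul_mem_right _ _ (hfP P hP)
      set Af : Finset (Ideal R) :=
        Pfin.filter (fun P => Disjoint (S : Set R) (P : Set R)) with hAfdef
      have hIAnotin : ¬ ((Af.inf id : Ideal R) : Set R) ⊆
          ⋃ Q ∈ (B : Set (Ideal R)), (Q : Set R) := by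
        intro hsub
        obtain ⟨Q, hQB, hle⟩ := (Ideal.subset_union_prime ⊥ ⊥ (fun i hi _ _ =>
          ((hPfin i).mp (Finset.mem_filter.mp hi).1).1.1)).mp hsub
        have hQmin : Q ∈ minimalPrimes R := (hPfin Q).mp (Finset.mem_filter.mp hQB).1
        haveI hQp : Q.IsPrime := hQmin.1.1
        obtain ⟨P, hPAf, hPQ⟩ := (Ideal.IsPrime.inf_le' hQp).mp hle
        have hPmin : P ∈ minimalPrimes R := (hPfin P).mp (Finset.mem_filter.mp hPAf).1
        have : Q ≤ P := hQmin.2 ⟨hPmin.1.1, bot_le⟩ (by simpa using hPQ)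
        have hPeqQ : P = Q := le_antisymm (by simpa using hPQ) this
        have hd1 : Disjoint (S : Set R) (P : Set R) := (Finset.mem_filter.mp hPAf).2
        have hd2 : ¬ Disjoint (S : Set R) (Q : Set R) := (Finset.mem_filter.mp hQB).2
        rw [hPeqQ] at hd1
        exact hd2 hd1
      obtain ⟨e₀, he₀IA, he₀B⟩ := Set.not_subset.mp hIAnotin
      have he₀P : ∀ P ∈ Af, e₀ ∈ P := fun P hP => Finset.inf_le (f := id) hP he₀IA
      have he₀Q : ∀ Q ∈ B, e₀ ∉ Q := fun Q hQ h => he₀B (Set.mem_biUnion hQ h)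
      have hnil : IsNilpotent (e₀ * u₀) := by
        rw [nilpotent_iff_mem_prime]
        intro J hJ
        obtain ⟨Pm, hPm, hPmle⟩ := Ideal.exists_minimalPrimes_le (bot_le (a := J))
        have hPmfin : Pm ∈ Pfin := (hPfin Pm).mpr hPm
        by_cases hdis : Disjoint (S : Set R) (Pm : Set R)
        · exact hPmle (Ideal.mul_mem_right _ _
            (he₀P Pm (Finset.mem_filter.mpr ⟨hPmfin, hdis⟩)))
        · exact hPmle (Ideal.mul_mem_left _ _
            (hu₀mem Pm (Finset.mem_filter.mpr ⟨hPmfin, hdis⟩)))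
      obtain ⟨k, hk⟩ := hnil
      have heD : e₀ ^ k ∈ D := by
        intro e he
        refine nzd e S N (hdisj e) (u₀ ^ k) (pow_mem hu₀S k) _ ?_
        have hzero : (cA R p e (u₀ ^ k))
            • ((cA R p e (e₀ ^ k)) • ((1 : FrobAlg R p e) ⊗ₜ[R] m)) = 0 := by
          rw [smul_smul, ← map_mul]
          have hz : u₀ ^ k * e₀ ^ k = 0 := by
            rw [← mul_pow, mul_comm u₀ e₀, hk]
          rw [hz, map_zero, zero_smul]
        rw [hzero]
        exact zero_mem _
      have hcP : ∀ P ∈ minimalPrimes R, Disjoint (S : Set R) (P : Set R) → c ∉ P :=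
        rzero_of_loc S c t (by rw [← hct]; exact hc')
      have hDnot : ¬ (D : Set R) ⊆ ⋃ P ∈ (Pfin : Set (Ideal R)), (P : Set R) := by
        intro hsub
        obtain ⟨P, hPf, hDP⟩ := (Ideal.subset_union_prime ⊥ ⊥ (fun i hi _ _ =>
          ((hPfin i).mp hi).1.1)).mp hsub
        have hPmin : P ∈ minimalPrimes R := (hPfin P).mp hPf
        by_cases hdis : Disjoint (S : Set R) (P : Set R)
        · exact hcP P hPmin hdis (hDP hcD)
        · exact he₀Q P (Finset.mem_filter.mpr ⟨hPf, hdis⟩)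
            (hPmin.1.1.mem_of_pow_mem k (hDP heD))
      obtain ⟨c'', hc''D, hc''min⟩ := Set.not_subset.mp hDnot
      exact ⟨c'', fun P hP hmem => hc''min (Set.mem_biUnion ((hPfin P).mpr hP) hmem),
        E, fun e he => hc''D e he⟩
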